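/- Let (R, m) be a Noetherian local ring with residue field k and E = E_R(k) the injective hull of k. Let I ⊆ R be an ideal and M, N two R-modules with Supp_R M ⊆ V(I) and M finitely generated. Then M ⊗_R Hom_R(Γ_I(N), E) is naturally isomorphic to M ⊗_R Hom_R(N, E). -/

import Mathlib

open CategoryTheory TensorProduct

universe u

noncomputable section

/-- The `I`-torsion (section functor) submodule `Γ_I(N) = {n ∈ N | I^k n = 0 for some k}`. -/
def torsionGamma {R : Type u} [CommRing R] (I : Ideal R) (N : Type u) [AddCommGroup N]
    [Module R N] : Submodule R N :=
  ⨆ k : ℕ, Submodule.torsionBySet R N (I ^ k : Ideal R)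

/-- `E` is an injective hull of the residue field of the local ring `R`:
it is an injective module and an essential extension of `R/m`. -/
def IsResidueFieldInjectiveHull (R : Type u) [CommRing R] [IsLocalRing R] (E : Type u)
    [AddCommGroup E] [Module R E] : Prop :=
  Injective (ModuleCat.of R E) ∧
    ∃ f : IsLocalRing.ResidueField R →ₗ[R] E, Function.Injective f ∧
      ∀ N : Submodule R E, N ≠ ⊥ → N ⊓ LinearMap.range f ≠ ⊥

/-- Extension property of a categorically injective module. -/
lemma exists_extend_of_injective {R : Type u} [CommRing R] {E X Y : Type u}
    [AddCommGroup E] [Module R E] [AddCommGroup X] [Module R X] [AddCommGroup Y] [Module R Y]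
    (hE : Injective (ModuleCat.of R E)) (i : X →ₗ[R] Y) (hi : Function.Injective i)
    (f : X →ₗ[R] E) : ∃ g : Y →ₗ[R] E, g.comp i = f := by
  letI : Injective (ModuleCat.of R E) := hE
  let i' : ModuleCat.of R X ⟶ ModuleCat.of R Y := ModuleCat.ofHom i
  haveI : Mono i' := (ModuleCat.mono_iff_injective i').mpr hi
  refine ⟨(Injective.factorThru (ModuleCat.ofHom f : ModuleCat.of R X ⟶ ModuleCat.of R E) i').hom, ?_⟩
  exact congrArg ModuleCat.Hom.hom (Injective.comp_factorThru (ModuleCat.ofHom f) i')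

/-- Over a Noetherian local ring, for `M` finitely generated with
`Supp_R M ⊆ V(I)` and `E` the injective hull of the residue field, the natural map
`M ⊗_R Hom_R(N, E) → M ⊗_R Hom_R(Γ_I(N), E)` induced by restriction along `Γ_I(N) ⊆ N`
is an isomorphism. -/
theorem tensor_hom_torsionGamma_equiv {R : Type u} [CommRing R] [IsNoetherianRing R]
    [IsLocalRing R] (E : Type u) [AddCommGroup E] [Module R E]
    (hE : IsResidueFieldInjectiveHull R E) (I : Ideal R) (M N : Type u)
    [AddCommGroup M] [Module R M] [Module.Finite R M] [AddCommGroup N] [Module R N]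
    (hM : Module.support R M ⊆ PrimeSpectrum.zeroLocus (I : Set R)) :
    Function.Bijective
      (LinearMap.lTensor M (LinearMap.lcomp R E (torsionGamma I N).subtype)) := by
  classical
  obtain ⟨hEinj, -⟩ := hE
  set Γ := torsionGamma I N with hΓ
  set ι := Γ.subtype with hι
  -- Step 1: some power of `I` annihilates `M`.
  have hrad : I ≤ (Module.annihilator R M).radical := by
    rw [← PrimeSpectrum.zeroLocus_subset_zeroLocus_iff]
    rw [← Module.support_eq_zeroLocus]
    exact hM
  obtain ⟨n, hn⟩ := Ideal.exists_pow_le_of_le_radical_of_fg hrad (IsNoetherian.noetherian I)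
  obtain ⟨s, hs⟩ := (IsNoetherian.noetherian (I ^ n) : (I ^ n).FG)
  have hkill : ∀ a ∈ (I ^ n : Ideal R), ∀ m : M, a • m = 0 := fun a ha m =>
    Module.mem_annihilator.mp (hn ha) m
  -- Key claim: if `f` vanishes on `Γ`, then `m ⊗ f = 0`.
  have key : ∀ (m : M) (f : N →ₗ[R] E), f.comp ι = 0 →
      (m ⊗ₜ[R] f : M ⊗[R] (N →ₗ[R] E)) = 0 := by
    intro m f hf
    have hfΓ : ∀ x : N, x ∈ Γ → f x = 0 := fun x hx => LinearMap.congr_fun hf ⟨x, hx⟩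
    -- the map `x ↦ (a • x)_{a ∈ s}`
    let ψ : N →ₗ[R] (↥s → N) := LinearMap.pi fun a => (a : R) • LinearMap.id
    have hker : LinearMap.ker ψ ≤ LinearMap.ker f := by
      intro x hx
      have hx' : ∀ a : ↥s, (a : R) • x = 0 := by
        intro a
        exact congrFun (LinearMap.mem_ker.mp hx) a
      have hxT : x ∈ Submodule.torsionBySet R N ((I ^ n : Ideal R) : Set R) := by
        have hall : ∀ b ∈ Submodule.span R (s : Set R), b • x = 0 := by
          intro b hb
          induction hb using Submodule.span_induction with
          | mem b hb => exact hx' ⟨b, hb⟩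
          | zero => simp
          | add b c _ _ hb hc => rw [add_smul, hb, hc, add_zero]
          | smul r b _ hb => rw [smul_eq_mul, mul_smul, hb, smul_zero]
        rw [Submodule.mem_torsionBySet_iff]
        rintro ⟨a, ha⟩
        exact hall a (by rw [hs]; exact ha)
      have hxΓ : x ∈ Γ :=
        le_iSup (fun k => Submodule.torsionBySet R N ((I ^ k : Ideal R) : Set R)) n hxT
      exact LinearMap.mem_ker.mpr (hfΓ x hxΓ)
    -- factor `f` through `ψ` using injectivity of `E`
    let f' := (LinearMap.ker ψ).liftQ f hker
    let ψ' := (LinearMap.ker ψ).liftQ ψ le_rfl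
    have hψ' : Function.Injective ψ' := by
      rw [← LinearMap.ker_eq_bot]
      exact Submodule.ker_liftQ_eq_bot _ _ _ le_rfl
    obtain ⟨g, hg⟩ := exists_extend_of_injective hEinj ψ' hψ' f'
    have hfg : ∀ x : N, f x = g (ψ x) := by
      intro x
      have h1 := LinearMap.congr_fun hg ((LinearMap.ker ψ).mkQ x)
      simpa [f', ψ', Submodule.liftQ_apply] using h1.symm
    -- decompose `f` as a sum of `I ^ n`-multiples
    have hsum : f = ∑ a ∈ (Finset.univ : Finset ↥s),
        (a : R) • (g.comp (LinearMap.single R (fun _ : ↥s => N) a)) := by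
      ext x
      rw [hfg x]
      have hψx : ψ x = ∑ a ∈ (Finset.univ : Finset ↥s),
          Pi.single a ((a : R) • x) := by
        rw [Finset.univ_sum_single (fun a : ↥s => (a : R) • x)]
        rfl
      rw [hψx, map_sum]
      simp only [LinearMap.coe_sum, Finset.sum_apply, LinearMap.smul_apply,
        LinearMap.coe_comp, Function.comp_apply, LinearMap.single_apply]
      refine Finset.sum_congr rfl fun a _ => ?_
      rw [← map_smul]
      congr 1
      ext b
      by_cases hb : b = a
      · subst hb; simp
      · simp [Pi.single_apply, hb]
    rw [hsum, TensorProduct.tmul_sum]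
    refine Finset.sum_eq_zero fun a _ => ?_
    have ham : (a : R) • m = 0 := hkill (a : R) (hs ▸ Submodule.subset_span a.2) m
    rw [TensorProduct.tmul_smul, TensorProduct.smul_tmul', ham, TensorProduct.zero_tmul]
  -- surjectivity of the restriction map
  have hsurj : Function.Surjective (LinearMap.lcomp R E ι) := by
    intro h
    obtain ⟨g, hg⟩ := exists_extend_of_injective hEinj ι Γ.injective_subtype h
    exact ⟨g, hg⟩
  constructor
  · -- injectivity
    have hexact := lTensor_exact M (LinearMap.exact_subtype_ker_map (LinearMap.lcomp R E ι)) hsurj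
    rw [← LinearMap.ker_eq_bot, hexact.linearMap_ker_eq]
    have hzero : LinearMap.lTensor M
        (LinearMap.ker (LinearMap.lcomp R E ι)).subtype = 0 := by
      apply TensorProduct.ext'
      intro m k
      rw [LinearMap.lTensor_tmul, LinearMap.zero_apply, Submodule.coe_subtype]
      exact key m k (LinearMap.mem_ker.mp k.2)
    rw [hzero, LinearMap.range_zero]
  · exact LinearMap.lTensor_surjective M hsurj
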